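/- Let ν, ω be positive definite matrices on a finite dimensional Hilbert space ℂ^n with spectral decompositions ν = Σ_λ λ P_λ(ν), ω = Σ_μ μ P_μ(ω). Then D(ν,ω) = inf_T [Tr(νT) + Tr(ω(1−T))] over projections T satisfies D(ν,ω) ≥ Σ_{λ,μ} Tr(P_λ(ν) P_μ(ω)) / (λ^{-1} + μ^{-1}). -/

import Mathlib

open scoped ComplexOrder

/-- Rank-one spectral projection of a Hermitian matrix onto its `i`-th eigenvector. -/
noncomputable def specProj {d : ℕ} {A : Matrix (Fin d) (Fin d) ℂ}
    (hA : A.IsHermitian) (i : Fin d) : Matrix (Fin d) (Fin d) ℂ :=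
  (hA.eigenvectorUnitary : Matrix (Fin d) (Fin d) ℂ) *
    Matrix.diagonal (fun k => if k = i then (1 : ℂ) else 0) *
    (star (hA.eigenvectorUnitary : Matrix (Fin d) (Fin d) ℂ))


lemma trace_diagonal_mul' {d : ℕ} (f : Fin d → ℂ) (X : Matrix (Fin d) (Fin d) ℂ) :
    (Matrix.diagonal f * X).trace = ∑ i, f i * X i i := by
  simp [Matrix.trace, Matrix.diag, Matrix.diagonal_mul]

lemma key_real (l m x y : ℝ) (hl : 0 < l) (hm : 0 < m) :
    (x + y) ^ 2 / (l⁻¹ + m⁻¹) ≤ l * x ^ 2 + m * y ^ 2 := by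
  have h1 : l⁻¹ + m⁻¹ = (l + m) / (l * m) := by field_simp; ring
  rw [h1, div_div_eq_mul_div, div_le_iff₀ (by positivity)]
  nlinarith [sq_nonneg (l * x - m * y), mul_pos hl hm]

lemma key_complex (l m : ℝ) (hl : 0 < l) (hm : 0 < m) (a b : ℂ) :
    Complex.normSq (a + b) / (l⁻¹ + m⁻¹) ≤ l * Complex.normSq a + m * Complex.normSq b := by
  have h1 : Complex.normSq (a + b) ≤ (‖a‖ + ‖b‖) ^ 2 := by
    rw [← Complex.sq_norm]
    exact pow_le_pow_left₀ (norm_nonneg _) (norm_add_le a b) 2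
  calc Complex.normSq (a + b) / (l⁻¹ + m⁻¹)
      ≤ (‖a‖ + ‖b‖) ^ 2 / (l⁻¹ + m⁻¹) := by gcongr
    _ ≤ l * ‖a‖ ^ 2 + m * ‖b‖ ^ 2 := key_real l m _ _ hl hm
    _ = l * Complex.normSq a + m * Complex.normSq b := by rw [Complex.sq_norm, Complex.sq_norm]

/-- Lower bound on the minimal error probability:
for every projection test `T`,
`Σ_{λ,μ} Tr(P_λ(ν) P_μ(ω)) / (λ⁻¹ + μ⁻¹) ≤ Tr(νT) + Tr(ω(1−T))`. -/
theorem minimal_error_lower_bound {d : ℕ}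
    (ν ω : Matrix (Fin d) (Fin d) ℂ) (hν : ν.PosDef) (hω : ω.PosDef)
    (T : Matrix (Fin d) (Fin d) ℂ) (hT : T.IsHermitian) (hTproj : T * T = T) :
    (∑ i : Fin d, ∑ j : Fin d,
        ((specProj hν.1 i * specProj hω.1 j).trace).re /
          ((hν.1.eigenvalues i)⁻¹ + (hω.1.eigenvalues j)⁻¹))
      ≤ ((ν * T).trace + (ω * (1 - T)).trace).re := by
  set U := (hν.1.eigenvectorUnitary : Matrix (Fin d) (Fin d) ℂ) with hUdef
  set V := (hω.1.eigenvectorUnitary : Matrix (Fin d) (Fin d) ℂ) with hVdef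
  have hUU : star U * U = 1 := Matrix.mem_unitaryGroup_iff'.mp hν.1.eigenvectorUnitary.2
  have hUU' : U * star U = 1 := Matrix.mem_unitaryGroup_iff.mp hν.1.eigenvectorUnitary.2
  have hVV : star V * V = 1 := Matrix.mem_unitaryGroup_iff'.mp hω.1.eigenvectorUnitary.2
  have hVV' : V * star V = 1 := Matrix.mem_unitaryGroup_iff.mp hω.1.eigenvectorUnitary.2
  set A := star V * T * U with hAdef
  set B := star V * (1 - T) * U with hBdef
  set M := star V * U with hMdef
  have hstarT : star T = T := hT
  have hS : (1 - T) * (1 - T) = 1 - T := by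
    simp [mul_sub, sub_mul, hTproj]
  have hstarS : star (1 - T) = 1 - T := by
    simp [star_sub, hstarT]
  have hABM : ∀ i j, A j i + B j i = M j i := by
    intro i j
    have : A + B = M := by
      rw [hAdef, hBdef, hMdef]
      noncomm_ring
    rw [← this]; rfl
  -- (a)
  have ha : ((ν * T).trace).re
      = ∑ i, hν.1.eigenvalues i * ∑ j, Complex.normSq (A j i) := by
    have h1 : star U * T * U = star A * A := by
      have hsA : star A = star U * T * V := by
        rw [hAdef]; simp [star_mul, mul_assoc, hstarT]
      rw [hsA, show star U * T * V * (star V * T * U)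
          = star U * ((T * (V * star V)) * (T * U)) by noncomm_ring, hVV']
      rw [show star U * (T * 1 * (T * U)) = star U * ((T * T) * U) by noncomm_ring, hTproj]
      noncomm_ring
    have h2 : (ν * T).trace
        = ∑ i, (hν.1.eigenvalues i : ℂ) * ∑ j, (starRingEnd ℂ) (A j i) * A j i := by
      conv_lhs => rw [hν.1.spectral_theorem, Unitary.conjStarAlgAut_apply]
      rw [show U * Matrix.diagonal (RCLike.ofReal ∘ hν.1.eigenvalues) * star U * T
          = U * (Matrix.diagonal (RCLike.ofReal ∘ hν.1.eigenvalues) * (star U * T)) by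
            noncomm_ring,
        Matrix.trace_mul_comm,
        show Matrix.diagonal (RCLike.ofReal ∘ hν.1.eigenvalues) * (star U * T) * U
          = Matrix.diagonal (RCLike.ofReal ∘ hν.1.eigenvalues) * (star U * T * U) by
            noncomm_ring,
        trace_diagonal_mul']
      refine Finset.sum_congr rfl fun i _ => ?_
      rw [h1]
      simp [Matrix.mul_apply, Matrix.star_apply]
    rw [h2]
    simp [Complex.normSq_eq_conj_mul_self, Finset.mul_sum, ← Complex.ofReal_sum, Complex.normSq_apply]
  -- (b)
  have hb : ((ω * (1 - T)).trace).re
      = ∑ j, hω.1.eigenvalues j * ∑ i, Complex.normSq (B j i) := by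
    have h1 : star V * (1 - T) * V = B * star B := by
      have hsB : star B = star U * (1 - T) * V := by
        rw [hBdef]; simp [star_mul, mul_assoc, hstarS]
      rw [hsB, hBdef, show star V * (1 - T) * U * (star U * (1 - T) * V)
          = star V * ((1 - T) * (U * star U) * ((1 - T) * V)) by noncomm_ring, hUU']
      rw [show star V * ((1 - T) * 1 * ((1 - T) * V))
          = star V * (((1 - T) * (1 - T)) * V) by noncomm_ring, hS]
      noncomm_ring
    have h2 : (ω * (1 - T)).trace
        = ∑ j, (hω.1.eigenvalues j : ℂ) * ∑ i, B j i * (starRingEnd ℂ) (B j i) := by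
      conv_lhs => rw [hω.1.spectral_theorem, Unitary.conjStarAlgAut_apply]
      rw [show V * Matrix.diagonal (RCLike.ofReal ∘ hω.1.eigenvalues) * star V * (1 - T)
          = V * (Matrix.diagonal (RCLike.ofReal ∘ hω.1.eigenvalues) * (star V * (1 - T))) by
            noncomm_ring,
        Matrix.trace_mul_comm,
        show Matrix.diagonal (RCLike.ofReal ∘ hω.1.eigenvalues) * (star V * (1 - T)) * V
          = Matrix.diagonal (RCLike.ofReal ∘ hω.1.eigenvalues) * (star V * (1 - T) * V) by
            noncomm_ring,
        trace_diagonal_mul']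
      refine Finset.sum_congr rfl fun j _ => ?_
      rw [h1]
      simp [Matrix.mul_apply, Matrix.star_apply]
    rw [h2]
    simp [Complex.mul_conj, Finset.mul_sum, ← Complex.ofReal_sum, Complex.normSq_apply]
  -- (c)
  have hc : ∀ i j, ((specProj hν.1 i * specProj hω.1 j).trace).re
      = Complex.normSq (M j i) := by
    intro i j
    have h1 : (specProj hν.1 i * specProj hω.1 j).trace
        = (starRingEnd ℂ) (M j i) * M j i := by
      show (U * Matrix.diagonal (fun k => if k = i then (1:ℂ) else 0) * star U *
        (V * Matrix.diagonal (fun k => if k = j then (1:ℂ) else 0) * star V)).trace = _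
      rw [show U * Matrix.diagonal (fun k => if k = i then (1:ℂ) else 0) * star U *
            (V * Matrix.diagonal (fun k => if k = j then (1:ℂ) else 0) * star V)
          = U * (Matrix.diagonal (fun k => if k = i then (1:ℂ) else 0) *
            (star U * (V * Matrix.diagonal (fun k => if k = j then (1:ℂ) else 0) * star V))) by
            noncomm_ring,
        Matrix.trace_mul_comm,
        show Matrix.diagonal (fun k => if k = i then (1:ℂ) else 0) *
            (star U * (V * Matrix.diagonal (fun k => if k = j then (1:ℂ) else 0) * star V)) * U
          = Matrix.diagonal (fun k => if k = i then (1:ℂ) else 0) *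
            (star M * Matrix.diagonal (fun k => if k = j then (1:ℂ) else 0) * M) by
            rw [hMdef]; simp only [star_mul, star_star]; noncomm_ring,
        trace_diagonal_mul']
      simp [Matrix.mul_apply, Matrix.mul_diagonal, Matrix.star_apply, Matrix.diagonal_apply,
        ite_mul, mul_ite, mul_zero, zero_mul, Complex.star_def, Finset.sum_ite_eq,
        Finset.sum_ite_eq']
    rw [h1, mul_comm, Complex.mul_conj, Complex.ofReal_re]
  -- combine
  rw [Complex.add_re, ha, hb]
  calc (∑ i : Fin d, ∑ j : Fin d,
        ((specProj hν.1 i * specProj hω.1 j).trace).re /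
          ((hν.1.eigenvalues i)⁻¹ + (hω.1.eigenvalues j)⁻¹))
      = ∑ i : Fin d, ∑ j : Fin d, Complex.normSq (A j i + B j i) /
          ((hν.1.eigenvalues i)⁻¹ + (hω.1.eigenvalues j)⁻¹) := by
        refine Finset.sum_congr rfl fun i _ => Finset.sum_congr rfl fun j _ => ?_
        rw [hc i j, hABM i j]
    _ ≤ ∑ i : Fin d, ∑ j : Fin d,
          (hν.1.eigenvalues i * Complex.normSq (A j i)
            + hω.1.eigenvalues j * Complex.normSq (B j i)) := by
        refine Finset.sum_le_sum fun i _ => Finset.sum_le_sum fun j _ => ?_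
        exact key_complex _ _ (hν.eigenvalues_pos i) (hω.eigenvalues_pos j) _ _
    _ = (∑ i, hν.1.eigenvalues i * ∑ j, Complex.normSq (A j i))
        + ∑ j, hω.1.eigenvalues j * ∑ i, Complex.normSq (B j i) := by
        simp only [Finset.sum_add_distrib, Finset.mul_sum]
        congr 1
        exact Finset.sum_comm
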